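/- Let A be an Iwanaga-Gorenstein algebra of Gorenstein dimension at most 1, i a vertex, and J = A e_i A. Then Ext^1_A(J, J) = 0. -/

import Mathlib

noncomputable section

open CategoryTheory Opposite DirectSum MulOpposite

/-- An idempotent is primitive if it is nonzero and is not the sum of two nonzero
orthogonal idempotents. -/
def IsPrimitiveIdempotent {A : Type} [Ring A] (a : A) : Prop :=
  IsIdempotentElem a ∧ a ≠ 0 ∧
    ∀ b c : A, IsIdempotentElem b → IsIdempotentElem c → b * c = 0 → c * b = 0 →
      a = b + c → b = 0 ∨ c = 0

/-- A complete family of orthogonal idempotents. -/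
def CompOrthIdem {A ι : Type} [Ring A] [Fintype ι] (e : ι → A) : Prop :=
  (∀ i j, i ≠ j → e i * e j = 0) ∧ (∀ i, IsIdempotentElem (e i)) ∧ (∑ i, e i) = 1

/-- The two-sided ideal `A e A` generated by an idempotent `e`, viewed as a
right `A`-module (i.e. a module over `Aᵐᵒᵖ`): it is the right `A`-submodule of `A`
spanned by all elements `b * e`. -/
def genIdeal {A : Type} [Ring A] (e : A) : Submodule Aᵐᵒᵖ A :=
  Submodule.span Aᵐᵒᵖ {x | ∃ b : A, x = b * e}

/-- The indecomposable projective right module `e A` at the idempotent `e`. -/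
def pIdeal {A : Type} [Ring A] (e : A) : Submodule Aᵐᵒᵖ A :=
  Submodule.span Aᵐᵒᵖ ({e} : Set A)

/-- The radical of a module: the intersection of all maximal submodules.
For a finite dimensional module `M` over a finite dimensional algebra this is `M · rad A`. -/
def radical (R M : Type) [Ring R] [AddCommGroup M] [Module R M] : Submodule R M :=
  sInf {m | IsCoatom m}

/-- `Ext¹` for right `A`-modules, as a `k`-module. -/
abbrev rext1 (k : Type) [Field k] (A : Type) [Ring A] [Algebra k A]
    (M N : ModuleCat.{0} Aᵐᵒᵖ) : ModuleCat.{0} k :=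
  ((Ext k (ModuleCat.{0} Aᵐᵒᵖ) 1).obj (op M)).obj N

/-- A right `A`-module `M` is Cohen-Macaulay if `Ext¹_A(M, A) = 0`. -/
def IsCM (k : Type) [Field k] (A : Type) [Ring A] [Algebra k A]
    (M : ModuleCat.{0} Aᵐᵒᵖ) : Prop :=
  Subsingleton (rext1 k A M (ModuleCat.of Aᵐᵒᵖ A))

/-- A module has injective dimension at most 1: it admits an injective
coresolution `0 → M → I₀ → I₁ → 0`. -/
def InjDimLE1 (R : Type) [Ring R] (M : ModuleCat.{0} R) : Prop :=
  ∃ (I₀ I₁ : ModuleCat.{0} R) (f : M →ₗ[R] I₀) (g : I₀ →ₗ[R] I₁),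
    Module.Injective R I₀ ∧ Module.Injective R I₁ ∧
    Function.Injective f ∧ Function.Surjective g ∧ Function.Exact f g

/-- A module has projective dimension at most 1: it admits a projective
resolution `0 → P₁ → P₀ → M → 0`. -/
def ProjDimLE1 (R : Type) [Ring R] (M : ModuleCat.{0} R) : Prop :=
  ∃ (P₀ P₁ : ModuleCat.{0} R) (g : P₀ →ₗ[R] M) (f : P₁ →ₗ[R] P₀),
    Module.Projective R P₀ ∧ Module.Projective R P₁ ∧
    Function.Surjective g ∧ Function.Injective f ∧ Function.Exact f g

/-- `R` is Iwanaga-Gorenstein of Gorenstein dimension at most 1: every projective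
module has injective dimension at most 1 and every injective module has projective
dimension at most 1. -/
def IwanagaGorenstein1 (R : Type) [Ring R] : Prop :=
  (∀ P : ModuleCat.{0} R, Module.Projective R P → InjDimLE1 R P) ∧
  (∀ I : ModuleCat.{0} R, Module.Injective R I → ProjDimLE1 R I)

section Core
variable {R AT P₀T I₀T I₁T M N T : Type} [Ring R]
  [AddCommGroup AT] [Module R AT] [AddCommGroup P₀T] [Module R P₀T]
  [AddCommGroup I₀T] [Module R I₀T] [AddCommGroup I₁T] [Module R I₁T]
  [AddCommGroup M] [Module R M] [AddCommGroup N] [Module R N]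
  [AddCommGroup T] [Module R T]

lemma my_descend (π : M →ₗ[R] N) (hπ : Function.Surjective π)
    (t : M →ₗ[R] T) (h : LinearMap.ker π ≤ LinearMap.ker t) :
    ∃ u : N →ₗ[R] T, u.comp π = t := by
  refine ⟨(Submodule.liftQ _ t h).comp
    ((LinearMap.quotKerEquivOfSurjective π hπ).symm : N →ₗ[R] _), ?_⟩
  ext x
  have : (LinearMap.quotKerEquivOfSurjective π hπ).symm (π x) =
      Submodule.Quotient.mk x := by
    apply (LinearMap.quotKerEquivOfSurjective π hπ).injective
    simp [LinearMap.quotKerEquivOfSurjective]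
  simp [this]

lemma my_stepA (hAproj : Module.Projective R AT)
    (ι : AT →ₗ[R] I₀T) (g : I₀T →ₗ[R] I₁T)
    (hI₀ : Module.Injective R I₀T) (hI₁ : Module.Injective R I₁T)
    (hι : Function.Injective ι) (hg : Function.Surjective g)
    (hex : Function.Exact ι g)
    (J : Submodule R AT) (π : P₀T →ₗ[R] ↥J) (hπ : Function.Surjective π)
    (φA : ↥(LinearMap.ker π) →ₗ[R] AT) :
    ∃ ψ : P₀T →ₗ[R] AT, ψ.comp (LinearMap.ker π).subtype = φA := by
  -- extend ι ∘ φA to α : P₀T → I₀T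
  obtain ⟨α, hα⟩ := hI₀.out (LinearMap.ker π).subtype Subtype.val_injective (ι.comp φA)
  -- g ∘ α kills ker π, descends to u : J → I₁
  obtain ⟨u, hu⟩ := my_descend π hπ (g.comp α) (by
    intro x hx
    simp only [LinearMap.mem_ker, LinearMap.comp_apply]
    have : α x = ι (φA ⟨x, hx⟩) := hα ⟨x, hx⟩
    rw [this]
    exact hex.apply_apply_eq_zero _)
  -- extend u to ū : AT → I₁
  obtain ⟨ub, hub⟩ := hI₁.out J.subtype Subtype.val_injective u
  -- lift ū along g using projectivity of AT
  obtain ⟨wb, hwb⟩ := Module.projective_lifting_property g ub hg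
  -- β := α - wb ∘ J.subtype ∘ π lands in ker g = range ι
  set β : P₀T →ₗ[R] I₀T := α - (wb.comp J.subtype).comp π with hβ
  have hβker : ∀ x, g (β x) = 0 := by
    intro x
    have h1 : g (α x) = u (π x) := by
      have := congrArg (fun (m : P₀T →ₗ[R] I₁T) => m x) hu
      simpa using this.symm
    have h2 : g (wb (J.subtype (π x))) = u (π x) := by
      have := congrArg (fun (m : AT →ₗ[R] I₁T) => m (J.subtype (π x))) hwb
      simp only [LinearMap.comp_apply] at this
      rw [this]
      exact hub (π x)
    have h2' : g (wb ((π x : AT))) = u (π x) := h2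
    simp [hβ, h1, h2']
  have hβrange : ∀ x, β x ∈ LinearMap.range ι := by
    intro x
    have hk := LinearMap.exact_iff.mp hex
    rw [← hk]
    exact LinearMap.mem_ker.mpr (hβker x)
  -- corestrict β through ι
  set eι := LinearEquiv.ofInjective ι hι
  refine ⟨(eι.symm : ↥(LinearMap.range ι) →ₗ[R] AT).comp
    (β.codRestrict (LinearMap.range ι) hβrange), ?_⟩
  ext x
  have hβx : β (x : P₀T) = ι (φA x) := by
    have h0 : ((π (x : P₀T) : AT)) = 0 := by
      have : (x : P₀T) ∈ LinearMap.ker π := x.2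
      rw [LinearMap.mem_ker.mp this]; rfl
    have hax := hα x
    simp only [LinearMap.comp_apply, Submodule.subtype_apply] at hax
    simp [hβ, h0, hax]
  have : β.codRestrict (LinearMap.range ι) hβrange (x : P₀T) = eι (φA x) := by
    apply Subtype.ext
    show _ = ((LinearEquiv.ofInjective ι hι (φA x)) : I₀T)
    rw [LinearEquiv.ofInjective_apply]; exact hβx
  simp [LinearMap.comp_apply, this]

end Core

section Core2
variable {R AT P₀T I₀T I₁T : Type} [Ring R]
  [AddCommGroup AT] [Module R AT] [AddCommGroup P₀T] [Module R P₀T]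
  [AddCommGroup I₀T] [Module R I₀T] [AddCommGroup I₁T] [Module R I₁T]

lemma my_extend (hAproj : Module.Projective R AT)
    (ι : AT →ₗ[R] I₀T) (g : I₀T →ₗ[R] I₁T)
    (hI₀ : Module.Injective R I₀T) (hI₁ : Module.Injective R I₁T)
    (hι : Function.Injective ι) (hg : Function.Surjective g)
    (hex : Function.Exact ι g)
    (J : Submodule R AT)
    (hJhom : ∀ h : ↥J →ₗ[R] AT ⧸ J, h = 0)
    (π : P₀T →ₗ[R] ↥J) (hπ : Function.Surjective π)
    (φ : ↥(LinearMap.ker π) →ₗ[R] ↥J) :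
    ∃ ψ : P₀T →ₗ[R] ↥J, ψ.comp (LinearMap.ker π).subtype = φ := by
  obtain ⟨ψA, hψA⟩ := my_stepA hAproj ι g hI₀ hI₁ hι hg hex J π hπ (J.subtype.comp φ)
  have hψA' : ∀ x : ↥(LinearMap.ker π), ψA (x : P₀T) = (φ x : AT) := by
    intro x
    have := congrArg (fun (m : ↥(LinearMap.ker π) →ₗ[R] AT) => m x) hψA
    simpa using this
  obtain ⟨h, hh⟩ := my_descend π hπ (J.mkQ.comp ψA) (by
    intro x hx
    simp only [LinearMap.mem_ker, LinearMap.comp_apply]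
    rw [hψA' ⟨x, hx⟩]
    simp [Submodule.Quotient.mk_eq_zero])
  have hmem : ∀ x, ψA x ∈ J := by
    intro x
    have := congrArg (fun (m : P₀T →ₗ[R] AT ⧸ J) => m x) hh
    simp only [LinearMap.comp_apply, hJhom h, LinearMap.zero_apply] at this
    have : J.mkQ (ψA x) = 0 := this.symm
    simpa [Submodule.Quotient.mk_eq_zero] using this
  refine ⟨ψA.codRestrict J hmem, ?_⟩
  ext x
  simpa using hψA' x

end Core2

/-- `Hom(J, A/J) = 0` for `J = A e A`. -/
lemma my_hom_quot_zero {A : Type} [Ring A] {e : A} (he : IsIdempotentElem e)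
    (h : ↥(genIdeal e) →ₗ[Aᵐᵒᵖ] (A ⧸ genIdeal e)) : h = 0 := by
  ext ⟨x, hx⟩
  show h ⟨x, hx⟩ = 0
  induction hx using Submodule.span_induction with
  | mem x hxs =>
      obtain ⟨b, rfl⟩ := hxs
      have hmem : b * e ∈ genIdeal e := Submodule.subset_span ⟨b, rfl⟩
      have hfix : (⟨b * e, hmem⟩ : ↥(genIdeal e)) = (MulOpposite.op e) • ⟨b * e, hmem⟩ := by
        apply Subtype.ext
        show b * e = b * e * e
        rw [mul_assoc, he]
      rw [hfix, map_smul]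
      obtain ⟨y, hy⟩ := Submodule.mkQ_surjective (genIdeal e) (h ⟨b * e, hmem⟩)
      rw [← hy, ← map_smul]
      have : y * e ∈ genIdeal e := Submodule.subset_span ⟨y, rfl⟩
      simp [Submodule.Quotient.mk_eq_zero, this]
  | zero => exact map_zero h
  | add x y hxm hym hx hy =>
      have : (⟨x + y, _⟩ : ↥(genIdeal e)) = ⟨x, hxm⟩ + ⟨y, hym⟩ := rfl
      rw [this, map_add, hx, hy, add_zero]
  | smul a x hxm hx =>
      have : (⟨a • x, _⟩ : ↥(genIdeal e)) = a • ⟨x, hxm⟩ := rfl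
      rw [this, map_smul, hx, smul_zero]


/-- Let `A` be an Iwanaga-Gorenstein algebra of Gorenstein dimension at
most 1 (for right modules), `i` a vertex with primitive idempotent `e i`, and
`J = A e_i A`. Then `Ext¹_A(J, J) = 0`. -/
theorem ext1_genIdeal_genIdeal
    (k A ι : Type) [Field k] [IsAlgClosed k] [Ring A] [Algebra k A] [FiniteDimensional k A]
    [Fintype ι] (e : ι → A) (hco : CompOrthIdem e)
    (hprim : ∀ j, IsPrimitiveIdempotent (e j))
    (hIG : IwanagaGorenstein1 Aᵐᵒᵖ) (i : ι) :
    Subsingleton (rext1 k A (ModuleCat.of Aᵐᵒᵖ ↥(genIdeal (e i)))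
      (ModuleCat.of Aᵐᵒᵖ ↥(genIdeal (e i)))) := by
  classical
  have he : IsIdempotentElem (e i) := hco.2.1 i
  have hAproj : Module.Projective Aᵐᵒᵖ A :=
    Module.Projective.of_equiv (MulOpposite.opLinearEquiv (R := Aᵐᵒᵖ) (M := A)).symm
  obtain ⟨I₀, I₁, ιA, g, hI₀, hI₁, hιA, hg, hex⟩ := hIG.1 (ModuleCat.of Aᵐᵒᵖ A) hAproj
  set Mobj : ModuleCat.{0} Aᵐᵒᵖ := ModuleCat.of Aᵐᵒᵖ ↥(genIdeal (e i)) with hMobj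
  obtain ⟨P⟩ : Nonempty (ProjectiveResolution Mobj) := HasProjectiveResolution.out
  suffices hz : Limits.IsZero ((P.complex.linearYonedaObj k Mobj).homology 1) by
    have h2 : Limits.IsZero (rext1 k A Mobj Mobj) :=
      Limits.IsZero.of_iso hz (P.isoExt 1 Mobj)
    have h3 : 𝟙 (rext1 k A Mobj Mobj) = 0 := (Limits.IsZero.iff_id_eq_zero _).mp h2
    refine ⟨fun a b => ?_⟩
    have ha : a = (0 : rext1 k A Mobj Mobj ⟶ rext1 k A Mobj Mobj) a := by
      rw [← h3]; rfl
    have hb : b = (0 : rext1 k A Mobj Mobj ⟶ rext1 k A Mobj Mobj) b := by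
      rw [← h3]; rfl
    rw [ha, hb]; rfl
  rw [← HomologicalComplex.exactAt_iff_isZero_homology,
    HomologicalComplex.exactAt_iff' _ 0 1 2 (by simp) (by simp),
    ShortComplex.moduleCat_exact_iff]
  intro f hf
  let f' : P.complex.X 1 ⟶ Mobj := f
  have hff : (HomologicalComplex.sc' (P.complex.linearYonedaObj k Mobj) 0 1 2).g f
      = P.complex.d 2 1 ≫ f' := by
    show (Linear.leftComp k Mobj (P.complex.d 2 1)) f' = _
    rw [Linear.leftComp_apply]
  have hf2 : ∀ z, f' (P.complex.d 2 1 z) = 0 := by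
    intro z
    have h : P.complex.d 2 1 ≫ f' = 0 := hff.symm.trans hf
    calc f' (P.complex.d 2 1 z) = (P.complex.d 2 1 ≫ f') z := rfl
      _ = (0 : P.complex.X 2 ⟶ Mobj) z := by rw [h]
      _ = 0 := LinearMap.zero_apply _
  let π₀ : P.complex.X 0 ⟶ Mobj :=
    P.π.f 0 ≫ (HomologicalComplex.singleObjXSelf (ComplexShape.down ℕ) 0 Mobj).hom
  have hπ₀epi : Epi π₀ := epi_comp _ _
  have hπsurj : Function.Surjective π₀ := (ModuleCat.epi_iff_surjective π₀).1 hπ₀epi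
  let πlin : P.complex.X 0 →ₗ[Aᵐᵒᵖ] ↥(genIdeal (e i)) := π₀.hom
  have hd10π : ∀ x, πlin (P.complex.d 1 0 x) = 0 := by
    intro x
    have h : P.complex.d 1 0 ≫ π₀ = 0 := by
      show P.complex.d 1 0 ≫ P.π.f 0 ≫ _ = 0
      rw [← Category.assoc, P.complex_d_comp_π_f_zero, Limits.zero_comp]
    calc πlin (P.complex.d 1 0 x) = (P.complex.d 1 0 ≫ π₀) x := rfl
      _ = (0 : P.complex.X 1 ⟶ Mobj) x := by rw [h]
      _ = 0 := LinearMap.zero_apply _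
  have hexact0 : ∀ x, πlin x = 0 → ∃ y, P.complex.d 1 0 y = x := by
    intro x hx
    apply (ShortComplex.moduleCat_exact_iff _).1 P.exact₀
    have h1 : (HomologicalComplex.singleObjXSelf (ComplexShape.down ℕ) 0 Mobj).hom
        (P.π.f 0 x) = 0 := hx
    have hinj : Function.Injective
        ((HomologicalComplex.singleObjXSelf (ComplexShape.down ℕ) 0 Mobj).hom) :=
      (ModuleCat.mono_iff_injective _).1 inferInstance
    apply hinj
    rw [h1, map_zero]
  have hexact1 : ∀ x : P.complex.X 1, P.complex.d 1 0 x = 0 →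
      ∃ z, P.complex.d 2 1 z = x :=
    fun x hx => (ShortComplex.moduleCat_exact_iff _).1 (P.exact_succ 0) x hx
  let d10 : P.complex.X 1 →ₗ[Aᵐᵒᵖ] P.complex.X 0 := (P.complex.d 1 0).hom
  let ρ : P.complex.X 1 →ₗ[Aᵐᵒᵖ] ↥(LinearMap.ker πlin) :=
    LinearMap.codRestrict (LinearMap.ker πlin) d10 (fun x => LinearMap.mem_ker.mpr (hd10π x))
  have hρsurj : Function.Surjective ρ := by
    rintro ⟨x, hx⟩
    obtain ⟨y, hy⟩ := hexact0 x (LinearMap.mem_ker.mp hx)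
    exact ⟨y, Subtype.ext hy⟩
  have hρker : LinearMap.ker ρ ≤
      LinearMap.ker (f'.hom : P.complex.X 1 →ₗ[Aᵐᵒᵖ] ↥(genIdeal (e i))) := by
    intro x hx
    have hd : d10 x = 0 := congrArg Subtype.val (LinearMap.mem_ker.mp hx)
    obtain ⟨z, hz⟩ := hexact1 x hd
    rw [LinearMap.mem_ker, ← hz]
    exact hf2 z
  obtain ⟨φ, hφ⟩ := my_descend ρ hρsurj
    (f'.hom : P.complex.X 1 →ₗ[Aᵐᵒᵖ] ↥(genIdeal (e i))) hρker
  obtain ⟨ψ, hψ⟩ := my_extend hAproj ιA g hI₀ hI₁ hιA hg hex (genIdeal (e i))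
    (fun h => my_hom_quot_zero he h) πlin hπsurj φ
  refine ⟨(ModuleCat.ofHom ψ : P.complex.X 0 ⟶ Mobj), ?_⟩
  show (Linear.leftComp k Mobj (P.complex.d 1 0)) (ModuleCat.ofHom ψ : P.complex.X 0 ⟶ Mobj) = f
  rw [Linear.leftComp_apply]
  ext z : 2
  show ψ (d10 z) = f' z
  calc ψ (d10 z)
      = (ψ.comp (LinearMap.ker πlin).subtype) (ρ z) := rfl
    _ = φ (ρ z) := by rw [hψ] <;> rfl
    _ = (φ.comp ρ) z := rfl
    _ = f' z := by rw [hφ]
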